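/- arXiv:2201.03715 — 2 statements merged into one kernel-verified Lean document; each statement's English description precedes it below -/
import Mathlib

section
/- Let x, x̂ ∈ ℂ with x ≠ 0, x̂ ≠ 0, and suppose |x̂ - x| ≤ ε|x| for some ε ∈ (0,1). Then 1 - ε ≤ cos(arg(x̂) - arg(x)). -/
theorem stmt_2 (x xh : ℂ) (hx : x ≠ 0) (hxh : xh ≠ 0) (ε : ℝ) (hε0 : 0 < ε) (hε1 : ε < 1)
    (h : ‖xh - x‖ ≤ ε * ‖x‖) :
    1 - ε ≤ Real.cos (Complex.arg xh - Complex.arg x) := by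
  have ha : 0 < ‖xh‖ := norm_pos_iff.mpr hxh
  have hb : 0 < ‖x‖ := norm_pos_iff.mpr hx
  have hA2 : (‖xh‖) ^ 2 = xh.re ^ 2 + xh.im ^ 2 := by
    rw [Complex.sq_norm, Complex.normSq_apply]; ring
  have hB2 : (‖x‖) ^ 2 = x.re ^ 2 + x.im ^ 2 := by
    rw [Complex.sq_norm, Complex.normSq_apply]; ring
  have hsq : (xh.re - x.re) ^ 2 + (xh.im - x.im) ^ 2 ≤ ε ^ 2 * ((x.re) ^ 2 + (x.im) ^ 2) := by
    have := mul_self_le_mul_self (norm_nonneg _) h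
    have h2 : (‖xh - x‖) ^ 2 ≤ (ε * ‖x‖) ^ 2 := by
      rw [sq, sq]; exact this
    rw [Complex.sq_norm, Complex.normSq_apply, Complex.sub_re, Complex.sub_im] at h2
    nlinarith [h2, hB2]
  rw [Real.cos_sub, Complex.cos_arg hxh, Complex.cos_arg hx, Complex.sin_arg, Complex.sin_arg,
    div_mul_div_comm, div_mul_div_comm, ← add_div, le_div_iff₀ (by positivity)]
  nlinarith [sq_nonneg (‖xh‖ - (1 - ε) * ‖x‖), hA2, hB2, hsq,
    mul_pos ha hb, mul_nonneg (mul_nonneg hε0.le (by linarith : (0:ℝ) ≤ 1 - ε)) (sq_nonneg (‖x‖))]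
end

section
/- Let f : ℂ^m → ℂⁿ be differentiable at 0 with f(0) = 0, satisfying: (i) for ω uniform on the unit sphere of ℂ^m, lim_{t→0⁺} t⁻² E[‖f(tω) - t Df(0)ω‖₂²] = 0, and (ii) there exist C, r, α > 0 with ‖f(y)‖₂ ≤ C‖y‖₂^α for ‖y‖₂ > r. Then for z a standard complex Gaussian on ℂ^m, lim_{σ→0} E[f(σz)] = 0. -/
open MeasureTheory ProbabilityTheory Matrix Filter

/-- The standard complex Gaussian measure on `ℂ^m`. -/
noncomputable def stdComplexGaussian (m : ℕ) : Measure (Fin m → ℂ) :=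
  Measure.pi fun _ : Fin m =>
    ((gaussianReal 0 1).prod (gaussianReal 0 1)).map fun p : ℝ × ℝ => (p.1 + p.2 * Complex.I)

/-- The Euclidean (ℓ²) norm of a finitely supported complex vector. -/
noncomputable def l2norm {ι : Type*} [Fintype ι] (v : ι → ℂ) : ℝ :=
  Real.sqrt (∑ i, Complex.normSq (v i))

/-- Radial projection onto the unit sphere of `ℂ^m`. -/
noncomputable def dirSphere (m : ℕ) (z : Fin m → ℂ) : Fin m → ℂ :=
  fun i => z i / (l2norm z : ℂ)

/-- The uniform probability measure on the unit sphere of `ℂ^m`, realized as the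
law of the direction of a standard complex Gaussian vector. -/
noncomputable def uniformSphere (m : ℕ) : Measure (Fin m → ℂ) :=
  (stdComplexGaussian m).map (dirSphere m)

/-! ### Auxiliary lemmas -/

theorem aux_pow_exp (k : ℕ) {b : ℝ} (hb : 0 < b) :
    Integrable fun x : ℝ => x ^ k * Real.exp (-b * x ^ 2) := by
  simpa [Real.rpow_natCast] using integrable_rpow_mul_exp_neg_mul_sq hb (s := (k:ℝ))
    (neg_one_lt_zero.trans_le (Nat.cast_nonneg k))

theorem aux_abs_pow_exp (k : ℕ) {b : ℝ} (hb : 0 < b) :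
    Integrable fun x : ℝ => |x| ^ k * Real.exp (-b * x ^ 2) := by
  have h2 := (integrable_exp_neg_mul_sq hb).add (aux_pow_exp (2*k) hb)
  refine h2.mono' ?_ ?_
  · exact ((continuous_abs.pow k).mul
      ((continuous_const.mul (continuous_pow 2)).rexp)).aestronglyMeasurable
  · filter_upwards with x
    have habs : 0 ≤ |x| ^ k := by positivity
    have hx : |x| ^ k ≤ 1 + x ^ (2*k) := by
      have h3 : |x| ^ (2*k) = x ^ (2*k) := by
        rw [pow_mul, pow_mul, sq_abs]
      rcases le_total (|x|) 1 with h | h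
      · have h1 : |x| ^ k ≤ 1 := pow_le_one₀ (abs_nonneg x) h
        have h4 : 0 ≤ x ^ (2*k) := by rw [← h3]; positivity
        linarith
      · have h1 : |x| ^ k ≤ |x| ^ (2*k) := pow_le_pow_right₀ h (by omega)
        linarith
    have he : 0 < Real.exp (-b * x ^ 2) := Real.exp_pos _
    have hnrm : ‖|x| ^ k * Real.exp (-b*x^2)‖ = |x| ^ k * Real.exp (-b*x^2) := by
      rw [Real.norm_eq_abs, abs_of_nonneg (by positivity)]
    rw [hnrm]
    calc |x| ^ k * Real.exp (-b*x^2) ≤ (1 + x^(2*k)) * Real.exp (-b*x^2) := by nlinarith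
    _ = Real.exp (-b*x^2) + x^(2*k) * Real.exp (-b*x^2) := by ring
    _ = _ := rfl

theorem aux_gauss_moment (k : ℕ) :
    Integrable (fun x : ℝ => |x| ^ k) (gaussianReal 0 1) := by
  rw [gaussianReal_of_var_ne_zero 0 one_ne_zero]
  rw [integrable_withDensity_iff (measurable_gaussianPDF 0 1)
    (Filter.Eventually.of_forall fun x => ENNReal.ofReal_lt_top)]
  have heq : ∀ x : ℝ, (gaussianPDF 0 1 x).toReal
      = (Real.sqrt (2*Real.pi))⁻¹ * Real.exp (-(2:ℝ)⁻¹ * x^2) := by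
    intro x
    rw [gaussianPDF_def, ENNReal.toReal_ofReal (gaussianPDFReal_nonneg 0 1 x),
      gaussianPDFReal_def]
    push_cast
    ring_nf
  simp_rw [heq]
  have h := ((aux_abs_pow_exp k (b := (2:ℝ)⁻¹) (by norm_num)).const_mul
    ((Real.sqrt (2*Real.pi))⁻¹))
  refine h.congr ?_
  filter_upwards with x
  ring

/-- The one-dimensional standard complex Gaussian. -/
noncomputable def nuC : Measure ℂ :=
  ((gaussianReal 0 1).prod (gaussianReal 0 1)).map fun p : ℝ × ℝ => (p.1 + p.2 * Complex.I)

theorem phi_continuous : Continuous fun p : ℝ × ℝ => ((p.1:ℂ) + (p.2:ℂ) * Complex.I) :=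
  (Complex.continuous_ofReal.comp continuous_fst).add
    ((Complex.continuous_ofReal.comp continuous_snd).mul continuous_const)

instance : IsProbabilityMeasure nuC :=
  Measure.isProbabilityMeasure_map phi_continuous.measurable.aemeasurable

instance (m : ℕ) : IsProbabilityMeasure (stdComplexGaussian m) := by
  have h : IsProbabilityMeasure nuC := inferInstance
  have heq : stdComplexGaussian m = Measure.pi (fun _ : Fin m => nuC) := rfl
  rw [heq]
  exact MeasureTheory.Measure.pi.instIsProbabilityMeasure (fun _ => nuC)

theorem nuC_moment (k : ℕ) : Integrable (fun z : ℂ => ‖z‖ ^ k) nuC := by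
  unfold nuC
  rw [integrable_map_measure
    (Continuous.aestronglyMeasurable
      (by fun_prop : Continuous fun z : ℂ => ‖z‖ ^ k))
    phi_continuous.measurable.aemeasurable]
  have hmom := aux_gauss_moment k
  have hone : Integrable (fun x : ℝ => 1 + |x| ^ k) (gaussianReal 0 1) :=
    (integrable_const 1).add hmom
  have hprod : Integrable (fun p : ℝ × ℝ => (1 + |p.1| ^ k) * (1 + |p.2| ^ k))
      ((gaussianReal 0 1).prod (gaussianReal 0 1)) := hone.mul_prod hone
  refine (hprod.const_mul ((2:ℝ)^k)).mono' ?_ ?_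
  · exact ((continuous_norm.comp phi_continuous).pow k).aestronglyMeasurable
  · filter_upwards with p
    simp only [Function.comp]
    have h1 : ‖(p.1:ℂ) + (p.2:ℂ) * Complex.I‖ ≤ |p.1| + |p.2| := by
      refine (norm_add_le _ _).trans ?_
      simp [Complex.norm_real]
    have h2 : ‖(p.1:ℂ) + (p.2:ℂ) * Complex.I‖ ^ k ≤ (|p.1| + |p.2|) ^ k :=
      pow_le_pow_left₀ (norm_nonneg _) h1 k
    have h3 : (|p.1| + |p.2|) ^ k ≤ 2 ^ k * ((1 + |p.1| ^ k) * (1 + |p.2| ^ k)) := by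
      have hmax : |p.1| + |p.2| ≤ 2 * max (|p.1|) (|p.2|) := by
        rcases le_total (|p.1|) (|p.2|) with h | h
        · rw [max_eq_right h]; linarith
        · rw [max_eq_left h]; linarith
      calc (|p.1| + |p.2|) ^ k ≤ (2 * max (|p.1|) (|p.2|)) ^ k :=
            pow_le_pow_left₀ (by positivity) hmax k
        _ = 2 ^ k * max (|p.1|) (|p.2|) ^ k := by rw [mul_pow]
        _ ≤ 2 ^ k * ((1 + |p.1| ^ k) * (1 + |p.2| ^ k)) := by
            refine mul_le_mul_of_nonneg_left ?_ (by positivity)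
            have hm : max (|p.1|) (|p.2|) ^ k ≤ |p.1| ^ k + |p.2| ^ k := by
              rcases max_cases (|p.1|) (|p.2|) with ⟨he, _⟩ | ⟨he, _⟩ <;> rw [he] <;>
                nlinarith [pow_nonneg (abs_nonneg p.1) k, pow_nonneg (abs_nonneg p.2) k]
            nlinarith [pow_nonneg (abs_nonneg p.1) k, pow_nonneg (abs_nonneg p.2) k]
    have hnn : (0:ℝ) ≤ ‖(p.1:ℂ) + (p.2:ℂ) * Complex.I‖ ^ k := by positivity
    rw [Real.norm_eq_abs, abs_of_nonneg hnn]
    linarith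

theorem pi_prod_integrable (m k : ℕ) :
    Integrable (fun z : Fin m → ℂ => ∏ i, (1 + ‖z i‖ ^ k))
      (stdComplexGaussian m) := by
  letI : MeasureSpace ℂ := ⟨nuC⟩
  haveI : IsProbabilityMeasure (volume : Measure ℂ) := (inferInstance : IsProbabilityMeasure nuC)
  haveI : SigmaFinite (volume : Measure ℂ) := inferInstance
  have h := MeasureTheory.Integrable.fintype_prod (𝕜 := ℝ)
    (f := fun _ : Fin m => fun x : ℂ => 1 + ‖x‖ ^ k)
    (fun _ => (integrable_const 1).add (nuC_moment k))
  exact h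

theorem sup_le_l2norm {p : ℕ} (v : Fin p → ℂ) : ‖v‖ ≤ l2norm v := by
  refine pi_norm_le_iff_of_nonneg (Real.sqrt_nonneg _) |>.mpr fun i => ?_
  have h1 : ‖v i‖ = Real.sqrt (Complex.normSq (v i)) := by
    rw [Complex.norm_def]
  rw [h1]
  show Real.sqrt (Complex.normSq (v i)) ≤ Real.sqrt (∑ j, Complex.normSq (v j))
  exact Real.sqrt_le_sqrt (Finset.single_le_sum
    (fun j _ => Complex.normSq_nonneg (v j)) (Finset.mem_univ i))

theorem l2norm_le_sup {m : ℕ} (v : Fin m → ℂ) : l2norm v ≤ Real.sqrt m * ‖v‖ := by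
  have h1 : ∑ i, Complex.normSq (v i) ≤ (m:ℝ) * ‖v‖ ^ 2 := by
    calc ∑ i, Complex.normSq (v i) ≤ ∑ _i : Fin m, ‖v‖ ^ 2 := by
          refine Finset.sum_le_sum fun i _ => ?_
          have h2 : Complex.normSq (v i) = ‖v i‖ ^ 2 := (Complex.sq_norm (v i)).symm
          rw [h2]
          exact pow_le_pow_left₀ (norm_nonneg _) (norm_le_pi_norm v i) 2
      _ = (m:ℝ) * ‖v‖ ^ 2 := by simp [Finset.sum_const, mul_comm]
  calc l2norm v ≤ Real.sqrt ((m:ℝ) * ‖v‖ ^ 2) := Real.sqrt_le_sqrt h1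
    _ = Real.sqrt m * ‖v‖ := by
        rw [Real.sqrt_mul (Nat.cast_nonneg m), Real.sqrt_sq (norm_nonneg v)]

theorem l2norm_nonneg {ι : Type*} [Fintype ι] (v : ι → ℂ) : 0 ≤ l2norm v :=
  Real.sqrt_nonneg _

theorem norm_pow_le_prod {m : ℕ} (k : ℕ) (hk : 1 ≤ k) (z : Fin m → ℂ) :
    ‖z‖ ^ k ≤ ∏ i, (1 + ‖z i‖ ^ k) := by
  have hfac : ∀ i : Fin m, (1:ℝ) ≤ 1 + ‖z i‖ ^ k := fun i => le_add_of_nonneg_right (by positivity)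
  rcases isEmpty_or_nonempty (Fin m) with h | h
  · have hz : z = 0 := Subsingleton.elim z 0
    rw [hz, norm_zero, zero_pow (by omega), Finset.univ_eq_empty, Finset.prod_empty]
    norm_num
  · obtain ⟨i0, hi0⟩ := Finite.exists_max fun i => ‖z i‖
    have hz : ‖z‖ ≤ ‖z i0‖ :=
      (pi_norm_le_iff_of_nonneg (norm_nonneg _)).mpr fun i => hi0 i
    have h1 : ‖z‖ ^ k ≤ ‖z i0‖ ^ k := pow_le_pow_left₀ (norm_nonneg _) hz k
    have h2 : ‖z i0‖ ^ k ≤ 1 + ‖z i0‖ ^ k := by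
      nlinarith [pow_nonneg (norm_nonneg (z i0)) k]
    have h3 : 1 + ‖z i0‖ ^ k ≤ ∏ i, (1 + ‖z i‖ ^ k) := by
      have hrest : (1:ℝ) ≤ ∏ i ∈ Finset.univ.erase i0, (1 + ‖z i‖ ^ k) := by
        calc (1:ℝ) = ∏ _i ∈ Finset.univ.erase i0, (1:ℝ) := by rw [Finset.prod_const_one]
          _ ≤ ∏ i ∈ Finset.univ.erase i0, (1 + ‖z i‖ ^ k) :=
            Finset.prod_le_prod (fun i _ => zero_le_one) (fun i _ => hfac i)
      calc 1 + ‖z i0‖ ^ k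
          ≤ (1 + ‖z i0‖ ^ k) * ∏ i ∈ Finset.univ.erase i0, (1 + ‖z i‖ ^ k) :=
            le_mul_of_one_le_right (le_trans zero_le_one (hfac i0)) hrest
        _ = ∏ i, (1 + ‖z i‖ ^ k) :=
            Finset.mul_prod_erase Finset.univ (fun i => 1 + ‖z i‖ ^ k) (Finset.mem_univ i0)
    linarith

/-- Noiseless limit of the mean: under differentiability at the origin with
L² Gateaux control along uniform sphere directions and polynomial growth,
`E[f(σz)] → 0` as `σ → 0⁺`. -/
theorem stmt_13 (m n : ℕ) (f : (Fin m → ℂ) → Fin n → ℂ)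
    (hf : Continuous f) (hf0 : f 0 = 0)
    (D : (Fin m → ℂ) →L[ℝ] (Fin n → ℂ)) (hD : HasFDerivAt f D 0)
    (hL2 : Tendsto
      (fun t : ℝ => (t ^ 2)⁻¹ *
        ∫ ω, l2norm (fun i => f (t • ω) i - t • D ω i) ^ 2 ∂(uniformSphere m))
      (nhdsWithin 0 (Set.Ioi 0)) (nhds 0))
    (C r α : ℝ) (hC : 0 < C) (hr : 0 < r) (hα : 0 < α)
    (hgrowth : ∀ y, r < l2norm y → l2norm (f y) ≤ C * l2norm y ^ α) :
    Tendsto (fun σ : ℝ => ∫ z, f (σ • z) ∂(stdComplexGaussian m))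
      (nhdsWithin 0 (Set.Ioi 0)) (nhds 0) := by
  classical
  obtain ⟨M, hM⟩ := (isCompact_closedBall (0 : (Fin m → ℂ)) r).exists_bound_of_continuousOn
    hf.continuousOn
  have hM0 : 0 ≤ M := by
    have h0 := hM 0 (Metric.mem_closedBall_self hr.le)
    rw [hf0, norm_zero] at h0
    exact h0
  set k : ℕ := ⌈α⌉₊ with hkdef
  have hk1 : 1 ≤ k := Nat.one_le_ceil_iff.mpr hα
  have hαk : α ≤ (k:ℝ) := Nat.le_ceil α
  -- global pointwise bound
  have hbound : ∀ y : Fin m → ℂ, ‖f y‖ ≤ M + C * (Real.sqrt m * ‖y‖) ^ α := by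
    intro y
    have hpow : (0:ℝ) ≤ (Real.sqrt m * ‖y‖) ^ α :=
      Real.rpow_nonneg (by positivity) α
    by_cases h : l2norm y ≤ r
    · have hy : ‖y‖ ≤ r := (sup_le_l2norm y).trans h
      have : y ∈ Metric.closedBall (0 : (Fin m → ℂ)) r := by
        rw [Metric.mem_closedBall, dist_zero_right]; exact hy
      have := hM y this
      nlinarith
    · push_neg at h
      have h1 : ‖f y‖ ≤ l2norm (f y) := sup_le_l2norm (f y)
      have h2 := hgrowth y h
      have h3 : l2norm y ^ α ≤ (Real.sqrt m * ‖y‖) ^ α :=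
        Real.rpow_le_rpow (l2norm_nonneg y) (l2norm_le_sup y) hα.le
      have h4 : C * l2norm y ^ α ≤ C * (Real.sqrt m * ‖y‖) ^ α :=
        mul_le_mul_of_nonneg_left h3 hC.le
      linarith
  -- dominating function
  set G : (Fin m → ℂ) → ℝ :=
    fun z => (M + C) + (C * Real.sqrt m ^ k) * ∏ i, (1 + ‖z i‖ ^ k) with hGdef
  have hGint : Integrable G (stdComplexGaussian m) :=
    (integrable_const (M + C)).add ((pi_prod_integrable m k).const_mul _)
  -- dominated convergence
  have hmain := tendsto_integral_filter_of_dominated_convergence (μ := stdComplexGaussian m)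
    (F := fun (σ : ℝ) (z : Fin m → ℂ) => f (σ • z)) (f := fun _ => (0 : Fin n → ℂ))
    (l := nhdsWithin (0:ℝ) (Set.Ioi 0)) (bound := G)
    (Filter.Eventually.of_forall fun σ =>
      (hf.comp (continuous_const_smul σ :
          Continuous fun z : Fin m → ℂ => σ • z)).aestronglyMeasurable)
    ?_ hGint ?_
  · simpa using hmain
  · -- bound
    have hIoo : Set.Ioo (0:ℝ) 1 ∈ nhdsWithin (0:ℝ) (Set.Ioi 0) :=
      Ioo_mem_nhdsGT (by norm_num)
    filter_upwards [hIoo] with σ hσ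
    filter_upwards with z
    have hσ0 : 0 < σ := hσ.1
    have hσ1 : σ ≤ 1 := hσ.2.le
    set B : ℝ := Real.sqrt m * ‖z‖ with hBdef
    have hB0 : 0 ≤ B := by positivity
    have hnorm : ‖σ • z‖ = σ * ‖z‖ := by
      rw [norm_smul, Real.norm_eq_abs, abs_of_pos hσ0]
    have h1 : ‖f (σ • z)‖ ≤ M + C * (Real.sqrt m * ‖σ • z‖) ^ α := hbound _
    have heq : Real.sqrt m * ‖σ • z‖ = σ * B := by rw [hnorm, hBdef]; ring
    rw [heq] at h1
    have hσB : σ * B ≤ B := by nlinarith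
    have hσB0 : 0 ≤ σ * B := by positivity
    have h2 : (σ * B) ^ α ≤ 1 + B ^ k := by
      rcases le_total (σ * B) 1 with h | h
      · have := Real.rpow_le_one hσB0 h hα.le
        have hBk : (0:ℝ) ≤ B ^ k := by positivity
        linarith
      · have hB1 : (1:ℝ) ≤ B := h.trans hσB
        have ha : (σ * B) ^ α ≤ B ^ α := Real.rpow_le_rpow hσB0 hσB hα.le
        have hb : B ^ α ≤ B ^ (k:ℝ) := Real.rpow_le_rpow_of_exponent_le hB1 hαk
        have hc : B ^ (k:ℝ) = B ^ k := Real.rpow_natCast B k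
        linarith
    have h3 : B ^ k = Real.sqrt m ^ k * ‖z‖ ^ k := by rw [hBdef, mul_pow]
    have h4 : ‖z‖ ^ k ≤ ∏ i, (1 + ‖z i‖ ^ k) := norm_pow_le_prod k hk1 z
    have h5 : Real.sqrt m ^ k * ‖z‖ ^ k ≤ Real.sqrt m ^ k * ∏ i, (1 + ‖z i‖ ^ k) :=
      mul_le_mul_of_nonneg_left h4 (by positivity)
    have h6 : C * (σ * B) ^ α ≤ C * (1 + B ^ k) := mul_le_mul_of_nonneg_left h2 hC.le
    rw [hGdef]
    simp only
    nlinarith [h1, h6, h5, h3]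
  · -- pointwise convergence
    refine Filter.Eventually.of_forall fun z => ?_
    have h1 : Tendsto (fun σ : ℝ => σ • z) (nhds 0) (nhds ((0:ℝ) • z)) :=
      ((continuous_id.smul continuous_const).tendsto (0:ℝ))
    rw [zero_smul] at h1
    have h2 : Tendsto (fun σ : ℝ => f (σ • z)) (nhdsWithin (0:ℝ) (Set.Ioi 0)) (nhds (f 0)) :=
      (hf.tendsto 0).comp (h1.mono_left (nhdsWithin_le_nhds (s := Set.Ioi 0)))
    rw [hf0] at h2
    exact h2
end
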